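/- arXiv:2012.15498 — 3 statements merged into one kernel-verified Lean document; each statement's English description precedes it below -/
import Mathlib

section
/- Reverse Jensen inequality for the logarithm (scalar version): for any η ∈ (0,1), any probability vector p ∈ Δ (entries nonnegative, summing to 1) in ℝ^D, and any vector x ∈ ℝ_+^D, we have log⟨x,p⟩ ≤ (1/η)·Σ_d p_d·log((1-η) + η·x_d) + Σ_d log(1 + (η/(1-η))·x_d). -/
set_option maxHeartbeats 1000000


open BigOperators

private lemma log_tangent {u : ℝ} (hu : 0 < u) : 1 - u⁻¹ ≤ Real.log u := by
  have h := Real.log_le_sub_one_of_pos (inv_pos.mpr hu)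
  rw [Real.log_inv] at h
  linarith

private lemma two_point_log {a b w : ℝ} (ha : 0 < a) (hb : 0 < b) (hw0 : 0 ≤ w) (hw1 : w ≤ 1) :
    (1 - w) * Real.log a + w * Real.log b ≤ Real.log ((1 - w) * a + w * b) := by
  have h := strictConcaveOn_log_Ioi.concaveOn.2 (Set.mem_Ioi.mpr ha) (Set.mem_Ioi.mpr hb)
    (by linarith : (0:ℝ) ≤ 1 - w) hw0 (by ring)
  simpa [smul_eq_mul] using h

private lemma bernoulli_log {α s : ℝ} (hα : 1 ≤ α) (hs : 0 ≤ s) :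
    Real.log (1 + α * s) ≤ α * Real.log (1 + s) := by
  have hα0 : 0 < α := lt_of_lt_of_le one_pos hα
  have hinv1 : α⁻¹ ≤ 1 := by
    rw [inv_le_one_iff₀]
    right; exact hα
  have h := two_point_log (a := 1) (b := 1 + α * s) (w := α⁻¹) one_pos
    (by nlinarith) (by positivity) hinv1
  have harg : (1 - α⁻¹) * 1 + α⁻¹ * (1 + α * s) = 1 + s := by
    field_simp
    ring
  rw [harg, Real.log_one, mul_zero, zero_add] at h
  calc Real.log (1 + α * s) = α * (α⁻¹ * Real.log (1 + α * s)) := by field_simp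
    _ ≤ α * Real.log (1 + s) := mul_le_mul_of_nonneg_left h hα0.le

private lemma key_ineq (η p x q : ℝ) (hη0 : 0 < η) (hη1 : η < 1)
    (hp0 : 0 ≤ p) (hp1 : p ≤ 1) (hx : 0 ≤ x) (hq0 : 0 ≤ q) (hq1 : q ≤ 1)
    (hqx : q ≠ 0 → 0 < x * p) :
    η * (q * Real.log (x * p) - q * Real.log q + (1 - Real.log (1 - η)) * q)
      ≤ p * Real.log ((1 - η) + η * x) + η * Real.log (1 + η / (1 - η) * x)
        + η * ((1 - Real.log (1 - η)) * p) := by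
  have hm0 : 0 < 1 - η := by linarith
  have hz0 : 0 < (1 - η) + η * x := by nlinarith
  have hβ : 0 ≤ η + (1 - η) * Real.log (1 - η) := by
    have h1 := log_tangent hm0
    have h2 := mul_le_mul_of_nonneg_left h1 hm0.le
    rw [mul_sub, mul_one, mul_inv_cancel₀ hm0.ne'] at h2
    linarith
  have hW : 0 ≤ p * η + (1 - η) * (p * Real.log (1 - η)) := by
    have := mul_le_mul_of_nonneg_left hβ hp0
    nlinarith
  have hlog1bx : 0 ≤ Real.log (1 + η / (1 - η) * x) := by
    apply Real.log_nonneg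
    have : 0 ≤ η / (1 - η) * x := by positivity
    linarith
  have hlogz_ge : Real.log (1 - η) ≤ Real.log ((1 - η) + η * x) :=
    Real.log_le_log hm0 (by nlinarith)
  by_cases hq : q = 0
  · simp only [hq, zero_mul, mul_zero, sub_zero, add_zero]
    have h3 : p * Real.log (1 - η) ≤ p * Real.log ((1 - η) + η * x) :=
      mul_le_mul_of_nonneg_left hlogz_ge hp0
    have h4 : 0 ≤ η * Real.log (1 + η / (1 - η) * x) := mul_nonneg hη0.le hlog1bx
    nlinarith
  · have hxp : 0 < x * p := hqx hq
    have hp' : 0 < p := by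
      rcases mul_pos_iff.mp hxp with ⟨_, h⟩ | ⟨h1, _⟩
      · exact h
      · linarith
    have hx' : 0 < x := by nlinarith
    have hq' : 0 < q := lt_of_le_of_ne hq0 (Ne.symm hq)
    have hpη : 0 < p + η := by linarith
    have hG3 : η ≤ (p + η) * Real.log ((p + η) / p) := by
      have h1 := log_tangent (show 0 < (p + η) / p by positivity)
      have h2 : ((p + η) / p)⁻¹ = p / (p + η) := by rw [inv_div]
      rw [h2] at h1
      have h3 : 1 - p / (p + η) = η / (p + η) := by field_simp; ring
      rw [h3] at h1
      calc η = (p + η) * (η / (p + η)) := by field_simp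
        _ ≤ (p + η) * Real.log ((p + η) / p) := mul_le_mul_of_nonneg_left h1 hpη.le
    by_cases hcase : x * p ≤ 1 - η
    · -- small case
      have hstepa : q * Real.log (x * p) - q * Real.log q + (1 - Real.log (1 - η)) * q
          ≤ x * p / (1 - η) := by
        have hMpos : 0 < x * p / ((1 - η) * q) := by positivity
        have h1 := Real.log_le_sub_one_of_pos hMpos
        have h2 : Real.log (x * p / ((1 - η) * q))
            = Real.log (x * p) - Real.log (1 - η) - Real.log q := by
          rw [Real.log_div hxp.ne' (by positivity), Real.log_mul hm0.ne' hq'.ne']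
          ring
        rw [h2] at h1
        have h3 := mul_le_mul_of_nonneg_left h1 hq0
        have hexp : q * (Real.log (x * p) - Real.log (1 - η) - Real.log q)
            = q * Real.log (x * p) - q * Real.log (1 - η) - q * Real.log q := by ring
        rw [hexp] at h3
        have h4 : q * (x * p / ((1 - η) * q) - 1) = x * p / (1 - η) - q := by
          field_simp
        rw [h4] at h3
        nlinarith
      have hs0 : 0 ≤ x * p / (1 - η) := by positivity
      have hs1 : x * p / (1 - η) ≤ 1 := by rw [div_le_one hm0]; exact hcase
      have harg1 : (1 - x * p / (1 - η)) * (1 - η)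
          + (x * p / (1 - η)) * ((1 - η) * ((p + η) / p)) = (1 - η) + η * x := by
        field_simp
        ring
      have G1 : (1 - x * p / (1 - η)) * Real.log (1 - η)
          + (x * p / (1 - η)) * Real.log ((1 - η) * ((p + η) / p))
          ≤ Real.log ((1 - η) + η * x) := by
        have h := two_point_log hm0 (show 0 < (1 - η) * ((p + η) / p) by positivity) hs0 hs1
        rw [harg1] at h
        exact h
      have hsplit : Real.log ((1 - η) * ((p + η) / p))
          = Real.log (1 - η) + Real.log ((p + η) / p) :=
        Real.log_mul hm0.ne' (by positivity)
      rw [hsplit] at G1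
      have harg2 : (1 - x * p / (1 - η)) * 1 + (x * p / (1 - η)) * ((p + η) / p)
          = 1 + η / (1 - η) * x := by
        field_simp
        ring
      have G2 : (1 - x * p / (1 - η)) * Real.log 1
          + (x * p / (1 - η)) * Real.log ((p + η) / p)
          ≤ Real.log (1 + η / (1 - η) * x) := by
        have h := two_point_log one_pos (show 0 < (p + η) / p by positivity) hs0 hs1
        rw [harg2] at h
        exact h
      rw [Real.log_one, mul_zero, zero_add] at G2
      have hpz := mul_le_mul_of_nonneg_left G1 hp0
      have hbx2 := mul_le_mul_of_nonneg_left G2 hη0.le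
      have hsG := mul_le_mul_of_nonneg_left hG3 hs0
      have hstepa' := mul_le_mul_of_nonneg_left hstepa hη0.le
      nlinarith [hpz, hbx2, hsG, hstepa']
    · -- large case
      push_neg at hcase
      have hcase' : 1 - η ≤ x * p := hcase.le
      have hA1 : 1 ≤ Real.log (x * p) + (1 - Real.log (1 - η)) := by
        have := Real.log_le_log hm0 hcase'
        linarith
      have hq2 : q - 1 ≤ q * Real.log q := by
        have h1 := log_tangent hq'
        have h2 := mul_le_mul_of_nonneg_left h1 hq0
        rw [mul_sub, mul_one, mul_inv_cancel₀ hq'.ne'] at h2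
        linarith
      have hstepa : q * Real.log (x * p) - q * Real.log q + (1 - Real.log (1 - η)) * q
          ≤ Real.log (x * p) + (1 - Real.log (1 - η)) := by
        nlinarith [mul_nonneg (show (0:ℝ) ≤ 1 - q by linarith)
          (show (0:ℝ) ≤ Real.log (x * p) + (1 - Real.log (1 - η)) - 1 by linarith), hq2]
      have ht1 : 1 ≤ x * p / (1 - η) := (one_le_div hm0).mpr hcase'
      have htpos : 0 < x * p / (1 - η) := by positivity
      have hα1 : 1 ≤ (p + η) / η := by rw [le_div_iff₀ hη0]; linarith
      have hs₀0 : 0 ≤ η * (x * p / (1 - η) - 1) / (p + η) :=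
        div_nonneg (mul_nonneg hη0.le (by linarith)) hpη.le
      have hbern := bernoulli_log (α := (p + η) / η) (s := η * (x * p / (1 - η) - 1) / (p + η))
        hα1 hs₀0
      have he1 : 1 + (p + η) / η * (η * (x * p / (1 - η) - 1) / (p + η)) = x * p / (1 - η) := by
        field_simp
        ring
      have he2 : 1 + η * (x * p / (1 - η) - 1) / (p + η)
          = (p + η * (x * p / (1 - η))) / (p + η) := by
        field_simp
        ring
      rw [he1, he2] at hbern
      have hG4 : η * Real.log (x * p / (1 - η))
          ≤ (p + η) * Real.log ((p + η * (x * p / (1 - η))) / (p + η)) := by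
        have h := mul_le_mul_of_nonneg_left hbern hη0.le
        calc η * Real.log (x * p / (1 - η))
            ≤ η * ((p + η) / η * Real.log ((p + η * (x * p / (1 - η))) / (p + η))) := h
          _ = (p + η) * Real.log ((p + η * (x * p / (1 - η))) / (p + η)) := by
              field_simp
      have hzarg : (1 - η) * ((p + η * (x * p / (1 - η))) / (p + η) * ((p + η) / p))
          = (1 - η) + η * x := by
        field_simp
      have hzdec : Real.log ((1 - η) + η * x)
          = Real.log (1 - η) + (Real.log ((p + η * (x * p / (1 - η))) / (p + η))
            + Real.log ((p + η) / p)) := by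
        rw [← Real.log_mul (by positivity) (by positivity),
          ← Real.log_mul hm0.ne' (by positivity), hzarg]
      have hlxp : Real.log (x * p) = Real.log (x * p / (1 - η)) + Real.log (1 - η) := by
        rw [← Real.log_mul htpos.ne' hm0.ne']
        congr 1
        field_simp
      have hlog1bx_eq : Real.log (1 + η / (1 - η) * x)
          = Real.log ((1 - η) + η * x) - Real.log (1 - η) := by
        rw [← Real.log_div hz0.ne' hm0.ne']
        congr 1
        field_simp
      have hstepa' := mul_le_mul_of_nonneg_left hstepa hη0.le
      rw [hlog1bx_eq, hzdec] at *
      nlinarith [hstepa', hG4, hG3, hW, hlxp]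

theorem reverse_jensen_log_scalar (D : ℕ) (η : ℝ) (hη0 : 0 < η) (hη1 : η < 1)
    (p x : Fin D → ℝ) (hp : ∀ d, 0 ≤ p d) (hp1 : ∑ d, p d = 1)
    (hx : ∀ d, 0 ≤ x d) (hpos : 0 < ∑ d, x d * p d) :
    Real.log (∑ d, x d * p d) ≤
      (1 / η) * ∑ d, p d * Real.log ((1 - η) + η * x d) +
        ∑ d, Real.log (1 + (η / (1 - η)) * x d) := by
  have hm0 : 0 < 1 - η := by linarith
  set S := ∑ d, x d * p d with hS_def
  have hS : 0 < S := hpos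
  set c := 1 - Real.log (1 - η) with hc_def
  have hxp0 : ∀ d, 0 ≤ x d * p d := fun d => mul_nonneg (hx d) (hp d)
  have hqle : ∀ d, x d * p d ≤ S := fun d =>
    Finset.single_le_sum (fun i _ => hxp0 i) (Finset.mem_univ d)
  have hple : ∀ d, p d ≤ 1 := fun d =>
    hp1 ▸ Finset.single_le_sum (fun i _ => hp i) (Finset.mem_univ d)
  set q := fun d => x d * p d / S with hq_def
  have hq0 : ∀ d, 0 ≤ q d := fun d => div_nonneg (hxp0 d) hS.le
  have hq1 : ∀ d, q d ≤ 1 := fun d => (div_le_one hS).mpr (hqle d)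
  have hqsum : ∑ d, q d = 1 := by
    simp only [hq_def]
    rw [← Finset.sum_div, ← hS_def, div_self hS.ne']
  have hqx : ∀ d, q d ≠ 0 → 0 < x d * p d := by
    intro d h
    rcases (hxp0 d).lt_or_eq with h1 | h1
    · exact h1
    · exfalso; apply h; simp only [hq_def, ← h1, zero_div]
  have hlogid : ∀ d, q d * Real.log (x d * p d) - q d * Real.log (q d) = q d * Real.log S := by
    intro d
    by_cases hqd : q d = 0
    · rw [hqd]; ring
    · have hxpd := hqx d hqd
      have : Real.log (q d) = Real.log (x d * p d) - Real.log S := by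
        simp only [hq_def]
        exact Real.log_div hxpd.ne' hS.ne'
      rw [this]; ring
  have key : ∀ d, η * (q d * Real.log (x d * p d) - q d * Real.log (q d) + c * q d)
      ≤ p d * Real.log ((1 - η) + η * x d) + η * Real.log (1 + η / (1 - η) * x d)
        + η * (c * p d) := fun d =>
    key_ineq η (p d) (x d) (q d) hη0 hη1 (hp d) (hple d) (hx d) (hq0 d) (hq1 d) (hqx d)
  set A := ∑ d, p d * Real.log ((1 - η) + η * x d) with hA_def
  set B := ∑ d, Real.log (1 + η / (1 - η) * x d) with hB_def
  have hmain : η * (Real.log S + c) ≤ A + η * B + η * c := by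
    calc η * (Real.log S + c)
        = ∑ d, η * (q d * Real.log S + c * q d) := by
          rw [← Finset.mul_sum]
          congr 1
          rw [Finset.sum_add_distrib, ← Finset.sum_mul, hqsum, one_mul, ← Finset.mul_sum,
            hqsum, mul_one]
      _ = ∑ d, η * (q d * Real.log (x d * p d) - q d * Real.log (q d) + c * q d) := by
          apply Finset.sum_congr rfl
          intro d _
          rw [hlogid d]
      _ ≤ ∑ d, (p d * Real.log ((1 - η) + η * x d) + η * Real.log (1 + η / (1 - η) * x d)
            + η * (c * p d)) := Finset.sum_le_sum fun d _ => key d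
      _ = A + η * B + η * c := by
          rw [Finset.sum_add_distrib, Finset.sum_add_distrib, ← Finset.mul_sum, ← hA_def,
            ← hB_def, ← Finset.mul_sum, ← Finset.mul_sum, hp1, mul_one]
  have hfin : Real.log S ≤ (A + η * B) / η := by
    rw [le_div_iff₀ hη0]
    nlinarith
  calc Real.log S ≤ (A + η * B) / η := hfin
    _ = 1 / η * A + B := by field_simp
end

section
/- Reverse Jensen inequality for the logarithm (quantum version): for any η ∈ (0,1), any density matrix ρ ∈ 𝒟, and any Hermitian positive semi-definite X ∈ ℂ^{D×D} with tr(Xρ) > 0, we have log tr(Xρ) ≤ (1/η)·tr(ρ·log((1-η)I + ηX)) + tr(log(I + (η/(1-η))X)). -/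
open Matrix BigOperators
open scoped ComplexOrder

noncomputable def matFun {D : ℕ} (f : ℝ → ℝ) (A : Matrix (Fin D) (Fin D) ℂ) :
    Matrix (Fin D) (Fin D) ℂ :=
  if h : A.IsHermitian then
    (h.eigenvectorUnitary : Matrix (Fin D) (Fin D) ℂ) *
      Matrix.diagonal (fun i => (f (h.eigenvalues i) : ℂ)) *
      star (h.eigenvectorUnitary : Matrix (Fin D) (Fin D) ℂ)
  else 0

lemma conj_diag_isHermitian {D : ℕ} (U : Matrix.unitaryGroup (Fin D) ℂ) (d : Fin D → ℝ) :
    ((U : Matrix (Fin D) (Fin D) ℂ) * Matrix.diagonal (fun i => (d i : ℂ)) *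
      star (U : Matrix (Fin D) (Fin D) ℂ)).IsHermitian := by
  have hd : (Matrix.diagonal (fun i => (d i : ℂ))).IsHermitian := by
    rw [Matrix.IsHermitian, Matrix.diagonal_conjTranspose]
    congr 1
    funext i
    simp [Pi.star_def, Complex.conj_ofReal]
  rw [Matrix.IsHermitian, Matrix.star_eq_conjTranspose]
  rw [Matrix.conjTranspose_mul, Matrix.conjTranspose_mul, Matrix.conjTranspose_conjTranspose,
    hd.eq, Matrix.mul_assoc]

lemma matFun_conj {D : ℕ} (f : ℝ → ℝ) (U : Matrix.unitaryGroup (Fin D) ℂ) (d : Fin D → ℝ) :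
    matFun f ((U : Matrix (Fin D) (Fin D) ℂ) * Matrix.diagonal (fun i => (d i : ℂ)) *
        star (U : Matrix (Fin D) (Fin D) ℂ)) =
      (U : Matrix (Fin D) (Fin D) ℂ) * Matrix.diagonal (fun i => (f (d i) : ℂ)) *
        star (U : Matrix (Fin D) (Fin D) ℂ) := by
  set Um := (U : Matrix (Fin D) (Fin D) ℂ) with hUm
  have hU1 : star Um * Um = 1 := U.2.1
  have hU2 : Um * star Um = 1 := U.2.2
  set A := Um * Matrix.diagonal (fun i => (d i : ℂ)) * star Um with hAdef
  have hA : A.IsHermitian := conj_diag_isHermitian U d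
  rw [matFun, dif_pos hA]
  set V := (hA.eigenvectorUnitary : Matrix (Fin D) (Fin D) ℂ) with hVdef
  have hV1 : star V * V = 1 := hA.eigenvectorUnitary.2.1
  have hV2 : V * star V = 1 := hA.eigenvectorUnitary.2.2
  have hspec : A = V * Matrix.diagonal (fun i => (hA.eigenvalues i : ℂ)) * star V := by
    simpa [Function.comp_def] using hA.spectral_theorem
  set W := star V * Um with hWdef
  have hcomm : Matrix.diagonal (fun i => (hA.eigenvalues i : ℂ)) * W
      = W * Matrix.diagonal (fun i => (d i : ℂ)) := by
    have h1 := congrArg (fun M => star V * M * Um) hspec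
    have h1' : star V * A * Um = Matrix.diagonal (fun i => (hA.eigenvalues i : ℂ)) * W := by
      rw [h1]
      calc star V * (V * Matrix.diagonal (fun i => (hA.eigenvalues i : ℂ)) * star V) * Um
          = (star V * V) * Matrix.diagonal (fun i => (hA.eigenvalues i : ℂ)) * (star V * Um) := by
            simp only [Matrix.mul_assoc]
        _ = _ := by rw [hV1, Matrix.one_mul, hWdef]
    have h2' : star V * A * Um = W * Matrix.diagonal (fun i => (d i : ℂ)) := by
      calc star V * A * Um
          = (star V * Um) * Matrix.diagonal (fun i => (d i : ℂ)) * (star Um * Um) := by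
            rw [hAdef]; simp only [Matrix.mul_assoc]
        _ = _ := by rw [hU1, Matrix.mul_one, hWdef]
    rw [← h1', h2']
  have hcomm2 : Matrix.diagonal (fun i => (f (hA.eigenvalues i) : ℂ)) * W
      = W * Matrix.diagonal (fun i => (f (d i) : ℂ)) := by
    ext i j
    have hentry' : (hA.eigenvalues i : ℂ) * W i j = W i j * (d j : ℂ) := by
      have := congr_fun (congr_fun hcomm i) j
      simpa [Matrix.diagonal_mul, Matrix.mul_diagonal] using this
    rw [Matrix.diagonal_mul, Matrix.mul_diagonal]
    rcases eq_or_ne (W i j) 0 with h0 | h0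
    · simp [h0]
    · have hde : (hA.eigenvalues i : ℂ) = (d j : ℂ) := by
        have : (hA.eigenvalues i : ℂ) * W i j = (d j : ℂ) * W i j := by
          rw [hentry']; ring
        exact mul_right_cancel₀ h0 this
      have hre : hA.eigenvalues i = d j := by exact_mod_cast hde
      rw [hre]; ring
  have hWU : W * star Um = star V := by
    rw [hWdef, Matrix.mul_assoc, hU2, Matrix.mul_one]
  have hVW : V * W = Um := by
    rw [hWdef, ← Matrix.mul_assoc, hV2, Matrix.one_mul]
  calc V * Matrix.diagonal (fun i => (f (hA.eigenvalues i) : ℂ)) * star V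
      = V * (Matrix.diagonal (fun i => (f (hA.eigenvalues i) : ℂ)) * W) * star Um := by
        rw [← hWU]; simp only [Matrix.mul_assoc]
    _ = V * (W * Matrix.diagonal (fun i => (f (d i) : ℂ))) * star Um := by rw [hcomm2]
    _ = (V * W) * Matrix.diagonal (fun i => (f (d i) : ℂ)) * star Um := by
        simp only [Matrix.mul_assoc]
    _ = Um * Matrix.diagonal (fun i => (f (d i) : ℂ)) * star Um := by rw [hVW]

lemma conj_smul_one_add_smul_diag {D : ℕ} (Um : Matrix (Fin D) (Fin D) ℂ)
    (hU2 : Um * star Um = 1) (c c' : ℂ) (g : Fin D → ℂ) :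
    c • (1 : Matrix (Fin D) (Fin D) ℂ) + c' • (Um * Matrix.diagonal g * star Um)
      = Um * Matrix.diagonal (fun i => c + c' * g i) * star Um := by
  have h1 : Matrix.diagonal (fun i => c + c' * g i)
      = c • (1 : Matrix (Fin D) (Fin D) ℂ) + c' • Matrix.diagonal g := by
    rw [Matrix.smul_one_eq_diagonal, ← Matrix.diagonal_smul, ← Matrix.diagonal_add]
    congr 1
  rw [h1, Matrix.mul_add, Matrix.add_mul, Matrix.mul_smul, Matrix.smul_mul, Matrix.mul_one,
    hU2, Matrix.mul_smul, Matrix.smul_mul]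

lemma trace_mul_conj_diag {D : ℕ} (ρ Um : Matrix (Fin D) (Fin D) ℂ) (g : Fin D → ℂ) :
    (ρ * (Um * Matrix.diagonal g * star Um)).trace
      = ∑ i, (star Um * ρ * Um) i i * g i := by
  have h1 : ρ * (Um * Matrix.diagonal g * star Um)
      = (ρ * Um) * Matrix.diagonal g * star Um := by simp only [Matrix.mul_assoc]
  rw [h1, Matrix.trace_mul_cycle]
  have h2 : star Um * (ρ * Um) * Matrix.diagonal g
      = (star Um * ρ * Um) * Matrix.diagonal g := by simp only [Matrix.mul_assoc]
  rw [h2]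
  rw [Matrix.trace]
  simp [Matrix.diag, Matrix.mul_diagonal]


lemma one_add_sum_le_prod' {ι : Type*} (s : Finset ι) (v : ι → ℝ) (hv : ∀ j ∈ s, 0 ≤ v j) :
    1 + ∑ j ∈ s, v j ≤ ∏ j ∈ s, (1 + v j) := by
  classical
  induction s using Finset.cons_induction with
  | empty => simp
  | cons a t hat ih =>
    rw [Finset.sum_cons, Finset.prod_cons]
    have hva : 0 ≤ v a := hv a (Finset.mem_cons_self a t)
    have hrest : ∀ j ∈ t, 0 ≤ v j := fun j hj => hv j (Finset.mem_cons_of_mem hj)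
    have h1 : 1 + ∑ j ∈ t, v j ≤ ∏ j ∈ t, (1 + v j) := ih (fun j hj => hrest j hj)
    have hsum : 0 ≤ ∑ j ∈ t, v j := Finset.sum_nonneg hrest
    nlinarith [h1, hva, hsum]

lemma log_chord {v S : ℝ} (hv : 0 ≤ v) (hvS : v ≤ S) (hS : 0 < S) :
    v / S * Real.log (1 + S) ≤ Real.log (1 + v) := by
  have hcc := strictConcaveOn_log_Ioi.concaveOn
  have h1 : (1 : ℝ) ∈ Set.Ioi (0:ℝ) := by norm_num
  have h2 : (1 + S : ℝ) ∈ Set.Ioi (0:ℝ) := by simp; linarith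
  have ha : 0 ≤ 1 - v / S := by
    have : v / S ≤ 1 := (div_le_one hS).mpr hvS
    linarith
  have hb : 0 ≤ v / S := div_nonneg hv hS.le
  have hab : (1 - v / S) + v / S = 1 := by ring
  have := hcc.2 h1 h2 ha hb hab
  have hx : (1 - v / S) • (1:ℝ) + (v / S) • (1 + S) = 1 + v := by
    rw [smul_eq_mul, smul_eq_mul, mul_one, mul_add, mul_one, div_mul_cancel₀ v hS.ne']
    ring
  rw [hx] at this
  simpa [Real.log_one] using this

lemma key_scalar {η s S : ℝ} (hη0 : 0 < η) (hη1 : η < 1) (hs : 0 < s) (hsS : s ≤ S) :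
    Real.log s ≤ Real.log η + (1 - η) / η * Real.log (1 - η) + (1 + s / (η * S)) * Real.log (1 + S) := by
  have hS : 0 < S := lt_of_lt_of_le hs hsS
  have h1S : (0:ℝ) < 1 + S := by linarith
  have h1η : (0:ℝ) < 1 - η := by linarith
  have l1 : Real.log (s / (η * (1 + S))) ≤ s / (η * (1 + S)) - 1 :=
    Real.log_le_sub_one_of_pos (by positivity)
  have l2 : S / (1 + S) ≤ Real.log (1 + S) := by
    have h := Real.log_le_sub_one_of_pos (show (0:ℝ) < 1 / (1 + S) by positivity)
    have hlog : Real.log (1 / (1 + S)) = - Real.log (1 + S) := by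
      rw [one_div, Real.log_inv]
    rw [hlog] at h
    have : 1 / (1 + S) - 1 = - (S / (1 + S)) := by field_simp; ring
    linarith [this ▸ h]
  have l3 : (-1 : ℝ) ≤ (1 - η) / η * Real.log (1 - η) := by
    have h := Real.log_le_sub_one_of_pos (show (0:ℝ) < 1 / (1 - η) by positivity)
    have hlog : Real.log (1 / (1 - η)) = - Real.log (1 - η) := by
      rw [one_div, Real.log_inv]
    rw [hlog] at h
    -- -log(1-η) ≤ 1/(1-η) - 1 = η/(1-η)
    have h2 : - Real.log (1 - η) ≤ η / (1 - η) := by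
      have : 1 / (1 - η) - 1 = η / (1 - η) := by field_simp; ring
      linarith [this ▸ h]
    -- multiply by (1-η)/η > 0
    have h3 : (1 - η) / η * (- Real.log (1 - η)) ≤ (1 - η) / η * (η / (1 - η)) :=
      mul_le_mul_of_nonneg_left h2 (by positivity)
    have h4 : (1 - η) / η * (η / (1 - η)) = 1 := by field_simp
    nlinarith [h3]
  have hsplit : Real.log s = Real.log (s / (η * (1 + S))) + Real.log η + Real.log (1 + S) := by
    rw [Real.log_div hs.ne' (by positivity), Real.log_mul hη0.ne' h1S.ne']
    ring
  have l4 : s / (η * (1 + S)) ≤ s / (η * S) * Real.log (1 + S) := by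
    have h5 : s / (η * S) * (S / (1 + S)) ≤ s / (η * S) * Real.log (1 + S) :=
      mul_le_mul_of_nonneg_left l2 (by positivity)
    have h6 : s / (η * S) * (S / (1 + S)) = s / (η * (1 + S)) := by
      field_simp
    linarith [h6 ▸ h5]
  have expand : (1 + s / (η * S)) * Real.log (1 + S)
      = Real.log (1 + S) + s / (η * S) * Real.log (1 + S) := by ring
  linarith

lemma classical_rj {n : ℕ} {η : ℝ} (hη0 : 0 < η) (hη1 : η < 1) (p x : Fin n → ℝ)
    (hp : ∀ j, 0 ≤ p j) (hp1 : ∑ j, p j = 1) (hx : ∀ j, 0 ≤ x j)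
    (ht : 0 < ∑ j, p j * x j) :
    Real.log (∑ j, p j * x j) ≤
      (1 / η) * ∑ j, p j * Real.log (1 - η + η * x j) +
        ∑ j, Real.log (1 + η / (1 - η) * x j) := by
  have h1η : (0:ℝ) < 1 - η := by linarith
  set t := ∑ j, p j * x j with hts
  set v : Fin n → ℝ := fun j => η / (1 - η) * x j with hv
  have hv0 : ∀ j, 0 ≤ v j := fun j => by
    have := hx j; positivity
  set s := ∑ j, p j * v j with hss
  set S := ∑ j, v j with hSs
  have hple : ∀ j, p j ≤ 1 := by
    intro j
    calc p j ≤ ∑ i, p i := Finset.single_le_sum (fun i _ => hp i) (Finset.mem_univ j)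
    _ = 1 := hp1
  have hsS : s ≤ S := Finset.sum_le_sum (fun j _ => by
    nlinarith [hv0 j, hple j, hp j])
  have hst : s = η / (1 - η) * t := by
    rw [hss, hts, Finset.mul_sum]
    exact Finset.sum_congr rfl (fun j _ => by rw [hv]; ring)
  have hs0 : 0 < s := by rw [hst]; positivity
  have hS0 : 0 < S := lt_of_lt_of_le hs0 hsS
  have hvle : ∀ j, v j ≤ S := fun j =>
    Finset.single_le_sum (fun i _ => hv0 i) (Finset.mem_univ j)
  -- rewrite first sum
  have hm : ∀ j, Real.log (1 - η + η * x j) = Real.log (1 - η) + Real.log (1 + v j) := by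
    intro j
    have : 1 - η + η * x j = (1 - η) * (1 + v j) := by
      rw [hv]; field_simp
    rw [this, Real.log_mul h1η.ne' (by nlinarith [hv0 j])]
  have hsum1 : ∑ j, p j * Real.log (1 - η + η * x j)
      = Real.log (1 - η) + ∑ j, p j * Real.log (1 + v j) := by
    calc ∑ j, p j * Real.log (1 - η + η * x j)
        = ∑ j, (p j * Real.log (1 - η) + p j * Real.log (1 + v j)) := by
          refine Finset.sum_congr rfl (fun j _ => ?_); rw [hm j]; ring
      _ = (∑ j, p j) * Real.log (1 - η) + ∑ j, p j * Real.log (1 + v j) := by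
          rw [Finset.sum_add_distrib, Finset.sum_mul]
      _ = _ := by rw [hp1]; ring

  have hchord : s / S * Real.log (1 + S) ≤ ∑ j, p j * Real.log (1 + v j) := by
    have h1 : ∀ j, p j * (v j / S * Real.log (1 + S)) ≤ p j * Real.log (1 + v j) :=
      fun j => mul_le_mul_of_nonneg_left (log_chord (hv0 j) (hvle j) hS0) (hp j)
    calc s / S * Real.log (1 + S) = ∑ j, p j * (v j / S * Real.log (1 + S)) := by
          rw [hss, Finset.sum_div, Finset.sum_mul]
          exact Finset.sum_congr rfl (fun j _ => by ring)
      _ ≤ ∑ j, p j * Real.log (1 + v j) := Finset.sum_le_sum (fun j _ => h1 j)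
  have hlogprod : Real.log (1 + S) ≤ ∑ j, Real.log (1 + v j) := by
    have hprod : (1 + S) ≤ ∏ j, (1 + v j) :=
      one_add_sum_le_prod' Finset.univ v (fun j _ => hv0 j)
    have hpos : ∀ j ∈ Finset.univ, (1 + v j) ≠ 0 := fun j _ => by nlinarith [hv0 j]
    calc Real.log (1 + S) ≤ Real.log (∏ j, (1 + v j)) :=
          Real.log_le_log (by linarith) hprod
      _ = ∑ j, Real.log (1 + v j) := Real.log_prod hpos
  have hkey := key_scalar hη0 hη1 hs0 hsS
  have htv : t = (1 - η) / η * s := by rw [hst]; field_simp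
  have hD : Real.log t = Real.log (1 - η) - Real.log η + Real.log s := by
    rw [htv, Real.log_mul (by positivity) hs0.ne', Real.log_div h1η.ne' hη0.ne']
  have hmul := mul_le_mul_of_nonneg_left hchord (show (0:ℝ) ≤ 1/η by positivity)
  have e1 : 1 / η * (s / S * Real.log (1 + S)) = s / (η * S) * Real.log (1 + S) := by
    ring
  have e2 : (1 / η) * Real.log (1 - η) - (1 - η) / η * Real.log (1 - η) = Real.log (1 - η) := by
    field_simp
    ring
  rw [hsum1]
  rw [hD]
  nlinarith [hmul, hlogprod, hkey, e1, e2]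

noncomputable def matLog {D : ℕ} : Matrix (Fin D) (Fin D) ℂ → Matrix (Fin D) (Fin D) ℂ :=
  matFun Real.log

noncomputable def matExp {D : ℕ} : Matrix (Fin D) (Fin D) ℂ → Matrix (Fin D) (Fin D) ℂ :=
  matFun Real.exp

def IsDensity {D : ℕ} (ρ : Matrix (Fin D) (Fin D) ℂ) : Prop :=
  ρ.PosSemidef ∧ ρ.trace = 1

theorem reverse_jensen_log_quantum (D : ℕ) (η : ℝ) (hη0 : 0 < η) (hη1 : η < 1)
    (ρ X : Matrix (Fin D) (Fin D) ℂ) (hρ : IsDensity ρ) (hX : X.PosSemidef)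
    (hpos : 0 < ((X * ρ).trace).re) :
    Real.log ((X * ρ).trace).re ≤
      (1 / η) * ((ρ * matLog (((1 - η : ℝ) : ℂ) • 1 + ((η : ℝ) : ℂ) • X)).trace).re +
        ((matLog (1 + ((η / (1 - η) : ℝ) : ℂ) • X)).trace).re := by
  obtain ⟨hρpsd, hρtr⟩ := hρ
  have hXh : X.IsHermitian := hX.1
  have h1η : (0:ℝ) < 1 - η := by linarith
  set U := hXh.eigenvectorUnitary with hUdef
  set Um := (U : Matrix (Fin D) (Fin D) ℂ) with hUm
  have hU1 : star Um * Um = 1 := U.2.1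
  have hU2 : Um * star Um = 1 := U.2.2
  set xv := hXh.eigenvalues with hxvdef
  have hxv : ∀ i, 0 ≤ xv i := fun i => hX.eigenvalues_nonneg i
  have hXdec : X = Um * Matrix.diagonal (fun i => (xv i : ℂ)) * star Um := by
    simpa [Function.comp_def] using hXh.spectral_theorem
  have hMdec : ((1 - η : ℝ) : ℂ) • (1 : Matrix (Fin D) (Fin D) ℂ) + ((η : ℝ) : ℂ) • X
      = Um * Matrix.diagonal (fun i => ((1 - η + η * xv i : ℝ) : ℂ)) * star Um := by
    calc ((1 - η : ℝ) : ℂ) • (1 : Matrix (Fin D) (Fin D) ℂ) + ((η : ℝ) : ℂ) • X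
        = Um * Matrix.diagonal (fun i => ((1 - η : ℝ) : ℂ) + ((η : ℝ) : ℂ) * (xv i : ℂ)) * star Um := by
          rw [hXdec]; exact conj_smul_one_add_smul_diag Um hU2 _ _ _
      _ = _ := by
          congr 1; congr 1; funext i; push_cast; ring
  have hBdec : (1 : Matrix (Fin D) (Fin D) ℂ) + ((η / (1 - η) : ℝ) : ℂ) • X
      = Um * Matrix.diagonal (fun i => ((1 + η / (1 - η) * xv i : ℝ) : ℂ)) * star Um := by
    calc (1 : Matrix (Fin D) (Fin D) ℂ) + ((η / (1 - η) : ℝ) : ℂ) • X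
        = (1:ℂ) • (1 : Matrix (Fin D) (Fin D) ℂ) + ((η / (1 - η) : ℝ) : ℂ) • X := by
          rw [one_smul]
      _ = Um * Matrix.diagonal (fun i => (1:ℂ) + ((η / (1 - η) : ℝ) : ℂ) * (xv i : ℂ)) * star Um := by
          rw [hXdec]; exact conj_smul_one_add_smul_diag Um hU2 _ _ _
      _ = _ := by
          congr 1; congr 1; funext i; push_cast; ring
  rw [hMdec, hBdec]
  simp only [matLog]
  rw [matFun_conj Real.log U (fun i => 1 - η + η * xv i),
    matFun_conj Real.log U (fun i => 1 + η / (1 - η) * xv i)]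
  set ρ' := star Um * ρ * Um with hρ'def
  have hρ'psd : ρ'.PosSemidef := by
    have := hρpsd.conjTranspose_mul_mul_same Um
    rw [hρ'def, Matrix.star_eq_conjTranspose]
    exact this
  set p : Fin D → ℝ := fun i => (ρ' i i).re with hpdef
  have hdiag : ∀ i, ρ' i i = ((p i : ℝ) : ℂ) := by
    intro i
    have h0 : (0:ℂ) ≤ ρ' i i := by
      exact hρ'psd.diag_nonneg
    have him := (Complex.le_def.mp h0).2
    apply Complex.ext
    · simp [hpdef]
    · simp [hpdef, ← him]
  have hp0 : ∀ i, 0 ≤ p i := by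
    intro i
    have h0 : (0:ℂ) ≤ ρ' i i := by
      exact hρ'psd.diag_nonneg
    exact (Complex.le_def.mp h0).1
  have hre : ∀ (c : Fin D → ℝ), (∑ i, ρ' i i * (c i : ℂ)).re = ∑ i, p i * c i := by
    intro c
    rw [Complex.re_sum]
    refine Finset.sum_congr rfl fun i _ => ?_
    rw [hdiag i, ← Complex.ofReal_mul, Complex.ofReal_re]
  have htr' : ρ'.trace = 1 := by
    rw [hρ'def, Matrix.trace_mul_cycle, hU2, Matrix.one_mul, hρtr]
  have hsum1 : ∑ i, p i = 1 := by
    have : (ρ'.trace).re = 1 := by rw [htr']; simp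
    rw [Matrix.trace] at this
    rw [← this, Complex.re_sum]
    rfl
  have htrXρ : ((X * ρ).trace).re = ∑ i, p i * xv i := by
    rw [Matrix.trace_mul_comm, hXdec, trace_mul_conj_diag, hre]
  have htrρM : ((ρ * (Um * Matrix.diagonal (fun i => (Real.log (1 - η + η * xv i) : ℂ)) * star Um)).trace).re
      = ∑ i, p i * Real.log (1 - η + η * xv i) := by
    rw [trace_mul_conj_diag, hre]
  have htrB : (((Um * Matrix.diagonal (fun i => (Real.log (1 + η / (1 - η) * xv i) : ℂ)) * star Um)).trace).re
      = ∑ i, Real.log (1 + η / (1 - η) * xv i) := by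
    rw [Matrix.trace_mul_cycle, hU1, Matrix.one_mul, Matrix.trace_diagonal]
    rw [Complex.re_sum]
    simp
  rw [htrXρ] at hpos ⊢
  rw [htrρM, htrB]
  exact classical_rj hη0 hη1 p xv hp0 hsum1 hxv hpos
end

section
/- Trace non-increase under the Q-Soft-Bayes update: let W be Hermitian positive definite with tr(W) ≤ 1, let A be Hermitian positive semi-definite with tr(Aρ) > 0 where ρ = W/tr(W), and let η ∈ (0,1). Define W' = exp(log W + log((1-η)I + η·A/tr(Aρ))). Then tr(W') ≤ tr(W). -/
open Matrix BigOperators NormedSpace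
open scoped Nat
open scoped ComplexOrder

set_option maxHeartbeats 1600000

variable {D : ℕ}

local notation "Mat" => Matrix (Fin D) (Fin D) ℂ

lemma trace_mul_sum (P Q : Mat) : (P * Q).trace = ∑ i, ∑ j, P i j * Q j i := by
  simp [Matrix.trace, Matrix.diag, Matrix.mul_apply]

lemma re_trace_conjTranspose_mul_self (P : Mat) :
    ((Pᴴ * P).trace).re = ∑ i, ∑ j, ‖P i j‖ ^ 2 := by
  rw [trace_mul_sum]
  rw [Complex.re_sum]
  rw [Finset.sum_comm]
  refine Finset.sum_congr rfl fun i _ => ?_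
  rw [Complex.re_sum]
  refine Finset.sum_congr rfl fun j _ => ?_
  simp [Matrix.conjTranspose_apply, ← Complex.normSq_eq_norm_sq, Complex.normSq_apply,
    Complex.mul_re]

lemma re_trace_conjTranspose_mul_self_nonneg (P : Mat) : 0 ≤ ((Pᴴ * P).trace).re := by
  rw [re_trace_conjTranspose_mul_self]
  positivity

/-- Cauchy-Schwarz for the trace. -/
lemma re_trace_mul_le (P Q : Mat) :
    ((P * Q).trace).re ≤
      Real.sqrt (((Pᴴ * P).trace).re) * Real.sqrt (((Qᴴ * Q).trace).re) := by
  have h1 : ((P * Q).trace).re ≤ ∑ i, ∑ j, ‖P i j‖ * ‖Q j i‖ := by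
    rw [trace_mul_sum, Complex.re_sum]
    refine le_trans (Finset.sum_le_sum fun i _ => ?_) le_rfl
    rw [Complex.re_sum]
    exact Finset.sum_le_sum fun j _ => by
      calc (P i j * Q j i).re ≤ ‖P i j * Q j i‖ := Complex.re_le_norm _
        _ = ‖P i j‖ * ‖Q j i‖ := norm_mul _ _
  refine h1.trans ?_
  rw [re_trace_conjTranspose_mul_self, re_trace_conjTranspose_mul_self]
  have := Real.sum_mul_le_sqrt_mul_sqrt (Finset.univ : Finset (Fin D × Fin D))
    (fun p => ‖P p.1 p.2‖) (fun p => ‖Q p.2 p.1‖)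
  simp only [Fintype.sum_prod_type] at this
  refine this.trans (le_of_eq ?_)
  congr 1
  exact congrArg Real.sqrt (Finset.sum_comm ..)


lemma mul_pow_shift (P Q : Mat) (k : ℕ) : (P * Q) ^ (k + 1) = P * (Q * P) ^ k * Q := by
  induction k with
  | zero => simp
  | succ k ih =>
    rw [pow_succ, ih, pow_succ]
    noncomm_ring

/-- Cyclicity of trace for powers of products. -/
lemma trace_pow_mul_comm (P Q : Mat) (k : ℕ) : ((P * Q) ^ k).trace = ((Q * P) ^ k).trace := by
  cases k with
  | zero => rfl
  | succ k =>
    rw [mul_pow_shift, Matrix.trace_mul_comm, ← mul_assoc, ← pow_succ']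

/-- `tr ((XᴴX)^k) = tr ((XXᴴ)^k)`. -/
lemma trace_pow_conjT (X : Mat) (k : ℕ) : ((Xᴴ * X) ^ k).trace = ((X * Xᴴ) ^ k).trace :=
  trace_pow_mul_comm _ _ _

lemma re_trace_pow_swap {A B : Mat} (hA : A.IsHermitian) (hB : B.IsHermitian) (k : ℕ) :
    (((B * A) ^ k).trace).re = (((A * B) ^ k).trace).re := by
  have h : ((A * B) ^ k)ᴴ = (B * A) ^ k := by
    rw [Matrix.conjTranspose_pow, Matrix.conjTranspose_mul, hA.eq, hB.eq]
  rw [← h, Matrix.trace_conjTranspose]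
  simp

/-- Key mutual induction: Golden-Thompson finite form (P) and Weyl-type bound (E). -/
theorem gt_core (n : ℕ) :
    (∀ A B : Mat, A.IsHermitian → B.IsHermitian →
      (((A * B) ^ (2 ^ n)).trace).re ≤ ((A ^ (2 ^ n) * B ^ (2 ^ n)).trace).re) ∧
    (∀ X : Mat, ((X ^ (2 ^ (n + 1))).trace).re ≤ (((Xᴴ * X) ^ (2 ^ n)).trace).re) := by
  induction n with
  | zero =>
    constructor
    · intro A B _ _; simp
    · intro X
      have h2 : X ^ 2 = X * X := sq X
      calc ((X ^ 2 ^ 1).trace).re = ((X * X).trace).re := by norm_num [h2]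
        _ ≤ Real.sqrt (((Xᴴ * X).trace).re) * Real.sqrt (((Xᴴ * X).trace).re) :=
            re_trace_mul_le X X
        _ = ((Xᴴ * X).trace).re :=
            Real.mul_self_sqrt (re_trace_conjTranspose_mul_self_nonneg X)
        _ = (((Xᴴ * X) ^ 2 ^ 0).trace).re := by norm_num
  | succ n ih =>
    obtain ⟨Pn, En⟩ := ih
    have Pn1 : ∀ A B : Mat, A.IsHermitian → B.IsHermitian →
        (((A * B) ^ (2 ^ (n+1))).trace).re ≤ ((A ^ (2 ^ (n+1)) * B ^ (2 ^ (n+1))).trace).re := by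
      intro A B hA hB
      have step1 : (((A * B) ^ (2 ^ (n+1))).trace).re ≤
          ((((A * B)ᴴ * (A * B)) ^ (2 ^ n)).trace).re := En (A * B)
      have hABh : (A * B)ᴴ = B * A := by
        rw [Matrix.conjTranspose_mul, hA.eq, hB.eq]
      have step2 : (((A * B)ᴴ * (A * B)) ^ (2 ^ n)).trace
          = (((B ^ 2) * (A ^ 2)) ^ (2 ^ n)).trace := by
        rw [hABh]
        have e1 : B * A * (A * B) = B * (A ^ 2 * B) := by noncomm_ring
        have e2 : A ^ 2 * B * B = A ^ 2 * B ^ 2 := by noncomm_ring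
        rw [e1, trace_pow_mul_comm B (A ^ 2 * B), e2, trace_pow_mul_comm _ _]
      have step3 : ((((B ^ 2) * (A ^ 2)) ^ (2 ^ n)).trace).re
          = ((((A ^ 2) * (B ^ 2)) ^ (2 ^ n)).trace).re :=
        re_trace_pow_swap (hA.pow 2) (hB.pow 2) _
      have step4 : ((((A ^ 2) * (B ^ 2)) ^ (2 ^ n)).trace).re ≤
          (((A ^ 2) ^ (2 ^ n) * (B ^ 2) ^ (2 ^ n)).trace).re :=
        Pn _ _ (hA.pow 2) (hB.pow 2)
      have epow : ∀ C : Mat, (C ^ 2) ^ (2 ^ n) = C ^ (2 ^ (n+1)) := by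
        intro C; rw [← pow_mul, pow_succ, mul_comm (2^n) 2, mul_comm 2 (2^n), pow_mul]
      calc (((A * B) ^ (2 ^ (n+1))).trace).re ≤ _ := step1
        _ = ((((A ^ 2) * (B ^ 2)) ^ (2 ^ n)).trace).re := by rw [step2]; exact step3
        _ ≤ (((A ^ 2) ^ (2 ^ n) * (B ^ 2) ^ (2 ^ n)).trace).re := step4
        _ = ((A ^ (2 ^ (n+1)) * B ^ (2 ^ (n+1))).trace).re := by rw [epow A, epow B]
    refine ⟨Pn1, ?_⟩
    -- E (n+2)
    intro X
    have hB : (Xᴴ * X).IsHermitian := Matrix.isHermitian_conjTranspose_mul_self X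
    have hC : (X * Xᴴ).IsHermitian := Matrix.isHermitian_mul_conjTranspose_self X
    have e0 : X ^ (2 ^ (n + 2)) = (X ^ 2) ^ (2 ^ (n+1)) := by
      rw [← pow_mul, pow_succ, mul_comm (2^(n+1)) 2, mul_comm 2 (2^(n+1)), pow_mul]
    set B := Xᴴ * X with hBdef
    set C := X * Xᴴ with hCdef
    have step1 : ((X ^ (2 ^ (n+2))).trace).re ≤
        ((((X ^ 2)ᴴ * (X ^ 2)) ^ (2 ^ n)).trace).re := by
      rw [e0]; exact En (X ^ 2)
    have step2 : (((X ^ 2)ᴴ * (X ^ 2)) ^ (2 ^ n)).trace = ((B * C) ^ (2 ^ n)).trace := by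
      have e1 : (X ^ 2)ᴴ * (X ^ 2) = Xᴴ * (Xᴴ * X * X) := by
        rw [Matrix.conjTranspose_pow]; noncomm_ring
      have e2 : Xᴴ * X * X * Xᴴ = B * C := by rw [hBdef, hCdef]; noncomm_ring
      rw [e1, trace_pow_mul_comm Xᴴ (Xᴴ * X * X), e2]
    have step3 : (((B * C) ^ (2 ^ n)).trace).re ≤ ((B ^ (2 ^ n) * C ^ (2 ^ n)).trace).re :=
      Pn B C (Matrix.isHermitian_conjTranspose_mul_self X) (Matrix.isHermitian_mul_conjTranspose_self X)
    have hBm : (B ^ (2 ^ n))ᴴ = B ^ (2 ^ n) := ((Matrix.isHermitian_conjTranspose_mul_self X).pow _).eq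
    have hCm : (C ^ (2 ^ n))ᴴ = C ^ (2 ^ n) := ((Matrix.isHermitian_mul_conjTranspose_self X).pow _).eq
    have epow : ∀ M : Mat, M ^ (2 ^ n) * M ^ (2 ^ n) = M ^ (2 ^ (n+1)) := by
      intro M; rw [← pow_add]; congr 1; ring
    have hCB : ((C ^ (2 ^ (n+1))).trace) = ((B ^ (2 ^ (n+1))).trace) := (trace_pow_conjT X _).symm
    have hnn : 0 ≤ ((B ^ (2 ^ (n+1))).trace).re := by
      have := re_trace_conjTranspose_mul_self_nonneg (B ^ (2 ^ n))
      rwa [hBm, epow B] at this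
    have step4 : ((B ^ (2 ^ n) * C ^ (2 ^ n)).trace).re ≤ (((Xᴴ * X) ^ (2 ^ (n+1))).trace).re := by
      have cs := re_trace_mul_le (B ^ (2 ^ n)) (C ^ (2 ^ n))
      rw [hBm, hCm, epow B, epow C, hCB] at cs
      calc ((B ^ (2 ^ n) * C ^ (2 ^ n)).trace).re ≤ _ := cs
        _ = ((B ^ (2 ^ (n+1))).trace).re := Real.mul_self_sqrt hnn
    exact step1.trans (by rw [step2]; exact step3.trans step4)


lemma herm_real_smul {H : Mat} (h : H.IsHermitian) (r : ℝ) : (((r : ℂ)) • H).IsHermitian := by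
  unfold Matrix.IsHermitian
  rw [Matrix.conjTranspose_smul, Complex.star_def, Complex.conj_ofReal, h.eq]



section Trotter

attribute [local instance] Matrix.linftyOpSemiNormedRing Matrix.linftyOpNormedRing
  Matrix.linftyOpNormedAlgebra

variable [Nonempty (Fin D)]

lemma norm_exp_le_exp_norm (M : Mat) : ‖exp M‖ ≤ Real.exp ‖M‖ := by
  rw [exp_eq_tsum ℂ]
  refine (norm_tsum_le_tsum_norm (f := fun n => (n !⁻¹ : ℂ) • M ^ n) ?_).trans ?_
  · exact norm_expSeries_summable' M
  · rw [Real.exp_eq_exp_ℝ, exp_eq_tsum_div]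
    refine Summable.tsum_le_tsum (fun n => ?_) (norm_expSeries_summable' M)
      (Real.summable_pow_div_factorial ‖M‖)
    rw [norm_smul]
    simp only [norm_inv, Complex.norm_natCast]
    rw [div_eq_inv_mul]
    exact mul_le_mul le_rfl (norm_pow_le M n) (norm_nonneg _)
      (by positivity)

lemma norm_exp_sub_one_sub_le (M : Mat) :
    ‖exp M - 1 - M‖ ≤ ‖M‖ ^ 2 * Real.exp ‖M‖ := by
  have hs := exp_series_hasSum_exp' (𝕂 := ℂ) M
  have h2 : HasSum (fun n => ((n + 2)!⁻¹ : ℂ) • M ^ (n + 2))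
      (exp M - ∑ i ∈ Finset.range 2, ((i)!⁻¹ : ℂ) • M ^ i) :=
    (hasSum_nat_add_iff' 2).mpr hs
  have hsum2 : (∑ i ∈ Finset.range 2, ((i)!⁻¹ : ℂ) • M ^ i) = 1 + M := by
    simp [Finset.sum_range_succ]
  rw [hsum2] at h2
  have he : exp M - 1 - M = exp M - (1 + M) := by rw [sub_sub]
  rw [he, ← h2.tsum_eq]
  have hmaj : ∀ n : ℕ, ‖((n + 2)!⁻¹ : ℂ) • M ^ (n + 2)‖ ≤ ‖M‖ ^ 2 * (‖M‖ ^ n / n !) := by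
    intro n
    rw [norm_smul]
    simp only [norm_inv, Complex.norm_natCast]
    calc (↑(n + 2)! : ℝ)⁻¹ * ‖M ^ (n + 2)‖ ≤ (↑(n)! : ℝ)⁻¹ * ‖M‖ ^ (n + 2) := by
          refine mul_le_mul ?_ (norm_pow_le M (n+2)) (norm_nonneg _) (by positivity)
          rw [inv_le_inv₀ (by positivity) (by positivity)]
          exact_mod_cast Nat.factorial_le (by omega)
      _ = ‖M‖ ^ 2 * (‖M‖ ^ n / n !) := by rw [pow_add]; ring
  have hsummaj : Summable (fun n : ℕ => ‖M‖ ^ 2 * (‖M‖ ^ n / n !)) :=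
    (Real.summable_pow_div_factorial ‖M‖).mul_left _
  refine (norm_tsum_le_tsum_norm ?_).trans ?_
  · exact Summable.of_nonneg_of_le (fun n => norm_nonneg _) hmaj hsummaj
  refine (Summable.tsum_le_tsum hmaj (Summable.of_nonneg_of_le (fun n => norm_nonneg _) hmaj hsummaj)
    hsummaj).trans ?_
  rw [tsum_mul_left, Real.exp_eq_exp_ℝ, exp_eq_tsum_div]

lemma norm_pow_sub_pow_le (u v : Mat) (κ : ℝ) (hu : ‖u‖ ≤ κ) (hv : ‖v‖ ≤ κ) (hκ : 1 ≤ κ)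
    (n : ℕ) : ‖u ^ n - v ^ n‖ ≤ n * κ ^ n * ‖u - v‖ := by
  have hκ0 : (0:ℝ) ≤ κ := le_trans zero_le_one hκ
  induction n with
  | zero => simp
  | succ n ih =>
    have key : u ^ (n+1) - v ^ (n+1) = u ^ n * (u - v) + (u ^ n - v ^ n) * v := by
      noncomm_ring
    calc ‖u ^ (n+1) - v ^ (n+1)‖ ≤ ‖u ^ n * (u - v)‖ + ‖(u ^ n - v ^ n) * v‖ := by
          rw [key]; exact norm_add_le _ _
      _ ≤ ‖u‖ ^ n * ‖u - v‖ + ‖u ^ n - v ^ n‖ * ‖v‖ := by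
          refine add_le_add ((norm_mul_le _ _).trans ?_) (norm_mul_le _ _)
          exact mul_le_mul_of_nonneg_right (norm_pow_le u n) (norm_nonneg _)
      _ ≤ κ ^ n * ‖u - v‖ + (n * κ ^ n * ‖u - v‖) * κ := by
          refine add_le_add (mul_le_mul_of_nonneg_right (pow_le_pow_left₀ (norm_nonneg _) hu n)
            (norm_nonneg _)) (mul_le_mul ih hv (norm_nonneg _) ?_)
          positivity
      _ ≤ κ ^ (n+1) * ‖u - v‖ + (n * κ ^ (n+1) * ‖u - v‖) := by
          have h1 : κ ^ n ≤ κ ^ (n+1) := pow_le_pow_right₀ hκ (by omega)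
          have h2 : (n : ℝ) * κ ^ n * ‖u - v‖ * κ = n * (κ ^ n * κ) * ‖u - v‖ := by ring
          rw [h2, ← pow_succ]
          exact add_le_add (mul_le_mul_of_nonneg_right h1 (norm_nonneg _)) le_rfl
      _ = (↑(n+1)) * κ ^ (n+1) * ‖u - v‖ := by push_cast; ring



lemma trotter_bound (H K : Mat) {n : ℕ} (hn : 1 ≤ n) :
    ‖(exp ((((n:ℝ)⁻¹ : ℝ) : ℂ) • H) * exp ((((n:ℝ)⁻¹ : ℝ) : ℂ) • K)) ^ n - exp (H + K)‖
      ≤ Real.exp (‖H‖ + ‖K‖) * ((‖H‖ + ‖K‖) ^ 2 * (4 + (‖H‖ + ‖K‖)) *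
          Real.exp (‖H‖ + ‖K‖)) / n := by
  set s : ℝ := ‖H‖ + ‖K‖ with hs
  set t : ℝ := (n:ℝ)⁻¹ with ht
  have hn0 : (0:ℝ) < n := by exact_mod_cast hn
  have ht0 : 0 < t := by positivity
  have ht1 : t ≤ 1 := by rw [ht]; exact inv_le_one_of_one_le₀ (by exact_mod_cast hn)
  have hnt : (n:ℝ) * t = 1 := mul_inv_cancel₀ (ne_of_gt hn0)
  have hs0 : 0 ≤ s := by positivity
  have hes : (1:ℝ) ≤ Real.exp s := Real.one_le_exp hs0
  set xa : Mat := ((t : ℂ)) • H with hxa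
  set xb : Mat := ((t : ℂ)) • K with hxb
  have hnxa : ‖xa‖ = t * ‖H‖ := by
    rw [hxa, norm_smul, Complex.norm_real, Real.norm_eq_abs, abs_of_pos ht0]
  have hnxb : ‖xb‖ = t * ‖K‖ := by
    rw [hxb, norm_smul, Complex.norm_real, Real.norm_eq_abs, abs_of_pos ht0]
  have hsab : xa + xb = ((t : ℂ)) • (H + K) := by rw [hxa, hxb, smul_add]
  have hnab : ‖xa + xb‖ ≤ t * s := by
    rw [hsab, norm_smul, Complex.norm_real, Real.norm_eq_abs, abs_of_pos ht0]
    exact mul_le_mul_of_nonneg_left (norm_add_le _ _) ht0.le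
  set u : Mat := exp (xa + xb) with hu
  set v : Mat := exp xa * exp xb with hv
  have hupow : u ^ n = exp (H + K) := by
    rw [hu, ← Matrix.exp_nsmul, hsab, ← Nat.cast_smul_eq_nsmul ℂ, smul_smul]
    norm_cast
    rw [hnt]
    norm_num
  -- norms of u and v
  set κ : ℝ := Real.exp (t * s) with hκ
  have hκ1 : 1 ≤ κ := Real.one_le_exp (by positivity)
  have hκu : ‖u‖ ≤ κ :=
    (norm_exp_le_exp_norm _).trans (Real.exp_le_exp.2 hnab)
  have hκv : ‖v‖ ≤ κ := by
    calc ‖v‖ ≤ ‖exp xa‖ * ‖exp xb‖ := norm_mul_le _ _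
      _ ≤ Real.exp ‖xa‖ * Real.exp ‖xb‖ := by
          exact mul_le_mul (norm_exp_le_exp_norm _) (norm_exp_le_exp_norm _) (norm_nonneg _)
            (Real.exp_pos _).le
      _ = Real.exp (‖xa‖ + ‖xb‖) := (Real.exp_add _ _).symm
      _ = κ := by rw [hκ, hnxa, hnxb, hs]; ring_nf
  have hκn : κ ^ n = Real.exp s := by
    rw [hκ, ← Real.exp_nat_mul]
    congr 1
    calc (n:ℝ) * (t * s) = ((n:ℝ) * t) * s := by ring
      _ = s := by rw [hnt, one_mul]
  -- the quadratic bound on ‖u - v‖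
  set ra : Mat := exp xa - 1 - xa with hra
  set rb : Mat := exp xb - 1 - xb with hrb
  have hiden : u - v = (u - 1 - (xa + xb)) - rb - xa * xb - xa * rb - ra * exp xb := by
    rw [hra, hrb, hv]
    noncomm_ring
  have bR : ‖u - 1 - (xa + xb)‖ ≤ t ^ 2 * (s ^ 2 * Real.exp s) := by
    refine (norm_exp_sub_one_sub_le _).trans ?_
    have h1 : ‖xa + xb‖ ≤ s := hnab.trans (by nlinarith)
    calc ‖xa + xb‖ ^ 2 * Real.exp ‖xa + xb‖ ≤ (t * s) ^ 2 * Real.exp s := by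
          exact mul_le_mul (pow_le_pow_left₀ (norm_nonneg _) hnab 2) (Real.exp_le_exp.2 h1)
            (Real.exp_pos _).le (by positivity)
      _ = t ^ 2 * (s ^ 2 * Real.exp s) := by ring
  have brb : ‖rb‖ ≤ t ^ 2 * (s ^ 2 * Real.exp s) := by
    refine (norm_exp_sub_one_sub_le _).trans ?_
    rw [hnxb]
    have h1 : t * ‖K‖ ≤ s := by nlinarith [norm_nonneg H, norm_nonneg K]
    calc (t * ‖K‖) ^ 2 * Real.exp (t * ‖K‖) ≤ (t * s) ^ 2 * Real.exp s := by
          refine mul_le_mul (pow_le_pow_left₀ (by positivity) ?_ 2) (Real.exp_le_exp.2 h1)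
            (Real.exp_pos _).le (by positivity)
          nlinarith [norm_nonneg H]
      _ ≤ t ^ 2 * (s ^ 2 * Real.exp s) := by nlinarith [Real.exp_pos s, sq_nonneg (t*s)]
  have bab : ‖xa * xb‖ ≤ t ^ 2 * (s ^ 2 * Real.exp s) := by
    calc ‖xa * xb‖ ≤ ‖xa‖ * ‖xb‖ := norm_mul_le _ _
      _ = t ^ 2 * (‖H‖ * ‖K‖) := by rw [hnxa, hnxb]; ring
      _ ≤ t ^ 2 * (s ^ 2 * Real.exp s) := by
          refine mul_le_mul_of_nonneg_left ?_ (by positivity)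
          nlinarith [norm_nonneg H, norm_nonneg K]
  have barb : ‖xa * rb‖ ≤ t ^ 2 * (s ^ 3 * Real.exp s) := by
    calc ‖xa * rb‖ ≤ ‖xa‖ * ‖rb‖ := norm_mul_le _ _
      _ ≤ (t * ‖H‖) * (t ^ 2 * (s ^ 2 * Real.exp s)) := by
          rw [hnxa]; exact mul_le_mul_of_nonneg_left brb (by positivity)
      _ ≤ t ^ 2 * (s ^ 3 * Real.exp s) := by
          have hH : ‖H‖ ≤ s := by nlinarith [norm_nonneg K]
          have h2 : t * ‖H‖ ≤ s := by nlinarith [norm_nonneg H]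
          nlinarith [Real.exp_pos s, norm_nonneg H, sq_nonneg t, sq_nonneg s,
            mul_nonneg (mul_nonneg (sq_nonneg t) (sq_nonneg s)) (Real.exp_pos s).le]
  have braeb : ‖ra * exp xb‖ ≤ t ^ 2 * (s ^ 2 * Real.exp s) := by
    calc ‖ra * exp xb‖ ≤ ‖ra‖ * ‖exp xb‖ := norm_mul_le _ _
      _ ≤ (‖xa‖ ^ 2 * Real.exp ‖xa‖) * Real.exp ‖xb‖ := by
          exact mul_le_mul (norm_exp_sub_one_sub_le _) (norm_exp_le_exp_norm _) (norm_nonneg _)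
            (by positivity)
      _ = ‖xa‖ ^ 2 * Real.exp (‖xa‖ + ‖xb‖) := by rw [Real.exp_add]; ring
      _ ≤ t ^ 2 * (s ^ 2 * Real.exp s) := by
          rw [hnxa, hnxb]
          have h1 : t * ‖H‖ + t * ‖K‖ ≤ s := by nlinarith [norm_nonneg H, norm_nonneg K]
          have hHs : ‖H‖ ≤ s := by rw [hs]; exact le_add_of_nonneg_right (norm_nonneg K)
          have h2 : (t * ‖H‖) ^ 2 ≤ t ^ 2 * s ^ 2 := by
            rw [mul_pow]
            exact mul_le_mul_of_nonneg_left (pow_le_pow_left₀ (norm_nonneg H) hHs 2) (sq_nonneg t)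
          calc (t * ‖H‖) ^ 2 * Real.exp (t * ‖H‖ + t * ‖K‖)
              ≤ (t ^ 2 * s ^ 2) * Real.exp s :=
                mul_le_mul h2 (Real.exp_le_exp.2 h1) (Real.exp_pos _).le (by positivity)
            _ = t ^ 2 * (s ^ 2 * Real.exp s) := by ring
  have buv : ‖u - v‖ ≤ t ^ 2 * (s ^ 2 * (4 + s) * Real.exp s) := by
    rw [hiden]
    calc ‖u - 1 - (xa + xb) - rb - xa * xb - xa * rb - ra * exp xb‖
        ≤ ‖u - 1 - (xa + xb) - rb - xa * xb - xa * rb‖ + ‖ra * exp xb‖ := norm_sub_le _ _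
      _ ≤ ‖u - 1 - (xa + xb) - rb - xa * xb‖ + ‖xa * rb‖ + ‖ra * exp xb‖ := by
          gcongr ?_ + _; exact norm_sub_le _ _
      _ ≤ ‖u - 1 - (xa + xb) - rb‖ + ‖xa * xb‖ + ‖xa * rb‖ + ‖ra * exp xb‖ := by
          gcongr ?_ + _ + _; exact norm_sub_le _ _
      _ ≤ ‖u - 1 - (xa + xb)‖ + ‖rb‖ + ‖xa * xb‖ + ‖xa * rb‖ + ‖ra * exp xb‖ := by
          gcongr ?_ + _ + _ + _; exact norm_sub_le _ _
      _ ≤ t ^ 2 * (s ^ 2 * Real.exp s) + t ^ 2 * (s ^ 2 * Real.exp s)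
            + t ^ 2 * (s ^ 2 * Real.exp s) + t ^ 2 * (s ^ 3 * Real.exp s)
            + t ^ 2 * (s ^ 2 * Real.exp s) :=
          add_le_add (add_le_add (add_le_add (add_le_add bR brb) bab) barb) braeb
      _ = t ^ 2 * (s ^ 2 * (4 + s) * Real.exp s) := by ring
  -- assemble
  have main : ‖v ^ n - u ^ n‖ ≤ Real.exp s * (s ^ 2 * (4 + s) * Real.exp s) * t := by
    rw [norm_sub_rev]
    calc ‖u ^ n - v ^ n‖ ≤ n * κ ^ n * ‖u - v‖ := norm_pow_sub_pow_le u v κ hκu hκv hκ1 n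
      _ ≤ n * κ ^ n * (t ^ 2 * (s ^ 2 * (4 + s) * Real.exp s)) := by
          refine mul_le_mul_of_nonneg_left buv ?_
          have : (0:ℝ) ≤ κ ^ n := by positivity
          positivity
      _ = Real.exp s * (s ^ 2 * (4 + s) * Real.exp s) * (((n:ℝ) * t) * t) := by
          rw [hκn]; ring
      _ = Real.exp s * (s ^ 2 * (4 + s) * Real.exp s) * t := by rw [hnt, one_mul]
  calc ‖(exp (((t : ℝ) : ℂ) • H) * exp (((t : ℝ) : ℂ) • K)) ^ n - exp (H + K)‖
      = ‖v ^ n - u ^ n‖ := by rw [hupow]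
    _ ≤ Real.exp s * (s ^ 2 * (4 + s) * Real.exp s) * t := main
    _ = Real.exp s * (s ^ 2 * (4 + s) * Real.exp s) / n := by
        rw [ht, div_eq_mul_inv]



lemma entry_le_norm (Z : Mat) (i j : Fin D) : ‖Z i j‖ ≤ ‖Z‖ := by
  have h1 : ‖Z i j‖₊ ≤ ∑ j' : Fin D, ‖Z i j'‖₊ :=
    Finset.single_le_sum (f := fun j' => ‖Z i j'‖₊) (fun _ _ => zero_le) (Finset.mem_univ j)
  have h2 : (∑ j' : Fin D, ‖Z i j'‖₊) ≤ Finset.univ.sup fun i : Fin D => ∑ j' : Fin D, ‖Z i j'‖₊ :=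
    Finset.le_sup (f := fun i : Fin D => ∑ j' : Fin D, ‖Z i j'‖₊) (Finset.mem_univ i)
  have h3 : ‖Z i j‖₊ ≤ ‖Z‖₊ := by
    rw [Matrix.linfty_opNNNorm_def]
    exact h1.trans h2
  calc ‖Z i j‖ = ‖Z i j‖ := rfl
    _ ≤ ‖Z‖ := h3
  
lemma abs_re_trace_sub_le (M N : Mat) :
    |((M.trace).re - (N.trace).re)| ≤ D * ‖M - N‖ := by
  have h1 : (M.trace).re - (N.trace).re = ((M - N).trace).re := by
    rw [Matrix.trace_sub, Complex.sub_re]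
  rw [h1]
  have h2 : |(((M - N).trace)).re| ≤ ‖(M - N).trace‖ := Complex.abs_re_le_norm _
  refine h2.trans ?_
  calc ‖(M - N).trace‖ = ‖∑ i, (M - N) i i‖ := rfl
    _ ≤ ∑ i : Fin D, ‖(M - N) i i‖ := by
        simpa using norm_sum_le Finset.univ (fun i : Fin D => (M - N) i i)
    _ ≤ ∑ _i : Fin D, ‖M - N‖ := Finset.sum_le_sum fun i _ => entry_le_norm _ i i
    _ = D * ‖M - N‖ := by simp [mul_comm]

theorem golden_thompson (H K : Mat) (hH : H.IsHermitian) (hK : K.IsHermitian) :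
    ((exp (H + K)).trace).re ≤ ((exp H * exp K).trace).re := by
  set C : ℝ := D * (Real.exp (‖H‖ + ‖K‖) * ((‖H‖ + ‖K‖) ^ 2 * (4 + (‖H‖ + ‖K‖)) *
      Real.exp (‖H‖ + ‖K‖))) with hC
  have hC0 : 0 ≤ C := by
    rw [hC]; positivity
  refine le_of_forall_pos_le_add ?_
  intro ε hε
  obtain ⟨k, hk⟩ := pow_unbounded_of_one_lt (C / ε) (y := (2:ℝ)) one_lt_two
  set n : ℕ := 2 ^ k with hn
  have hn1 : 1 ≤ n := Nat.one_le_two_pow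
  set t : ℝ := ((n : ℝ))⁻¹ with ht
  set A : Mat := exp (((t : ℝ) : ℂ) • H) with hA
  set B : Mat := exp (((t : ℝ) : ℂ) • K) with hB
  have hermA : A.IsHermitian := (herm_real_smul hH t).exp
  have hermB : B.IsHermitian := (herm_real_smul hK t).exp
  have hApow : A ^ n = exp H := by
    rw [hA, ← Matrix.exp_nsmul, ← Nat.cast_smul_eq_nsmul ℂ, smul_smul]
    norm_cast
    rw [ht]
    rw [mul_inv_cancel₀ (by positivity : ((n:ℝ)) ≠ 0)]
    norm_num
  have hBpow : B ^ n = exp K := by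
    rw [hB, ← Matrix.exp_nsmul, ← Nat.cast_smul_eq_nsmul ℂ, smul_smul]
    norm_cast
    rw [ht]
    rw [mul_inv_cancel₀ (by positivity : ((n:ℝ)) ≠ 0)]
    norm_num
  have hstep1 : ((exp (H + K)).trace).re ≤ (((A * B) ^ n).trace).re + C / n := by
    have hb := trotter_bound H K (n := n) hn1
    have habs := abs_re_trace_sub_le ((A * B) ^ n) (exp (H + K))
    have h2 : ((exp (H + K)).trace).re - (((A * B) ^ n).trace).re ≤ C / n := by
      have := abs_le.1 habs
      have h3 := this.1
      have h4 : (D : ℝ) * ‖(A * B) ^ n - exp (H + K)‖ ≤ C / n := by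
        rw [hC, mul_div_assoc]
        exact mul_le_mul_of_nonneg_left hb (by positivity)
      linarith
    linarith
  have hstep2 : (((A * B) ^ n).trace).re ≤ ((A ^ n * B ^ n).trace).re :=
    (gt_core k).1 A B hermA hermB
  have hstep3 : C / n ≤ ε := by
    rw [div_le_iff₀ (by positivity : (0:ℝ) < (n:ℝ))]
    rw [div_lt_iff₀ hε] at hk
    have : ((n:ℕ):ℝ) = (2:ℝ) ^ k := by rw [hn]; push_cast; ring
    rw [this]
    nlinarith
  calc ((exp (H + K)).trace).re ≤ (((A * B) ^ n).trace).re + C / n := hstep1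
    _ ≤ ((A ^ n * B ^ n).trace).re + C / n := by linarith
    _ = ((exp H * exp K).trace).re + C / n := by rw [hApow, hBpow]
    _ ≤ ((exp H * exp K).trace).re + ε := by linarith



end Trotter

lemma herm_of_unitary_conj {u : Mat} (w : Fin D → ℝ) (_ : u * star u = 1) :
    (u * Matrix.diagonal (fun i => (w i : ℂ)) * star u).IsHermitian := by
  have hd : (Matrix.diagonal (fun i => (w i : ℂ))).IsHermitian := by
    have hst : (star fun i => ((w i : ℝ) : ℂ)) = fun i => ((w i : ℝ) : ℂ) := by
      funext i
      simp [Complex.conj_ofReal]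
    rw [Matrix.IsHermitian, Matrix.diagonal_conjTranspose, hst]
  have := Matrix.isHermitian_mul_mul_conjTranspose u hd
  rwa [Matrix.star_eq_conjTranspose]

/-- Decomposition independence of `matFun`. -/
lemma matFun_decomp (f : ℝ → ℝ) {A : Mat} (u : Mat) (w : Fin D → ℝ)
    (hu1 : star u * u = 1) (hu2 : u * star u = 1)
    (hdec : A = u * Matrix.diagonal (fun i => (w i : ℂ)) * star u) :
    matFun f A = u * Matrix.diagonal (fun i => (f (w i) : ℂ)) * star u := by
  have hA : A.IsHermitian := hdec ▸ herm_of_unitary_conj w hu2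
  rw [matFun, dif_pos hA]
  set U : Mat := (hA.eigenvectorUnitary : Mat) with hU
  have hU1 : star U * U = 1 := Unitary.coe_star_mul_self hA.eigenvectorUnitary
  have hU2 : U * star U = 1 := Unitary.coe_mul_star_self hA.eigenvectorUnitary
  have hspec : A = U * Matrix.diagonal (fun i => ((hA.eigenvalues i : ℝ) : ℂ)) * star U := by
    exact hA.spectral_theorem.trans (Unitary.conjStarAlgAut_apply ..)
  set dlam : Mat := Matrix.diagonal (fun i => ((hA.eigenvalues i : ℝ) : ℂ)) with hdlam
  set dw : Mat := Matrix.diagonal (fun i => (w i : ℂ)) with hdw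
  set S : Mat := star U * u with hS
  have hcomm : dlam * S = S * dw := by
    have h1 : star U * A * u = dlam * S := by
      rw [hspec]
      calc star U * (U * dlam * star U) * u = (star U * U) * dlam * (star U * u) := by
            noncomm_ring
        _ = dlam * S := by rw [hU1, one_mul, hS]
    have h2 : star U * A * u = S * dw := by
      rw [hdec]
      calc star U * (u * dw * star u) * u = (star U * u) * dw * (star u * u) := by
            noncomm_ring
        _ = S * dw := by rw [hu1, mul_one, hS]
    rw [← h1, h2]
  have hfcomm : Matrix.diagonal (fun i => ((f (hA.eigenvalues i) : ℝ) : ℂ)) * S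
      = S * Matrix.diagonal (fun i => ((f (w i) : ℝ) : ℂ)) := by
    ext i j
    rw [Matrix.diagonal_mul, Matrix.mul_diagonal]
    have hij := congrFun (congrFun hcomm i) j
    rw [hdlam, hdw] at hij
    have hij' : ((hA.eigenvalues i : ℝ) : ℂ) * S i j = S i j * ((w j : ℝ) : ℂ) := by
      have e1 : (dlam * S) i j = ((hA.eigenvalues i : ℝ) : ℂ) * S i j := by
        rw [hdlam, Matrix.diagonal_mul]
      have e2 : (S * dw) i j = S i j * ((w j : ℝ) : ℂ) := by
        rw [hdw, Matrix.mul_diagonal]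
      rw [← e1, ← e2, hcomm]
    by_cases hSij : S i j = 0
    · rw [hSij]; ring
    · have heq : ((hA.eigenvalues i : ℝ) : ℂ) = ((w j : ℝ) : ℂ) := by
        rw [mul_comm (S i j) _] at hij'
        exact mul_right_cancel₀ hSij hij'
      have heqR : hA.eigenvalues i = w j := by exact_mod_cast heq
      rw [heqR]
      ring
  have hSS : S * star S = 1 := by
    have hstS : star S = star u * U := by rw [hS, StarMul.star_mul, star_star]
    rw [hS, hstS]
    calc star U * u * (star u * U) = star U * (u * star u) * U := by noncomm_ring
      _ = star U * U := by rw [hu2, mul_one]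
      _ = 1 := hU1
  have hV : u = U * S := by
    rw [hS, ← mul_assoc, hU2, one_mul]
  calc U * Matrix.diagonal (fun i => ((f (hA.eigenvalues i) : ℝ) : ℂ)) * star U
      = U * (Matrix.diagonal (fun i => ((f (hA.eigenvalues i) : ℝ) : ℂ)) * (S * star S)) * star U := by
        rw [hSS, mul_one]
    _ = U * (Matrix.diagonal (fun i => ((f (hA.eigenvalues i) : ℝ) : ℂ)) * S) * (star S * star U) := by
        noncomm_ring
    _ = U * (S * Matrix.diagonal (fun i => ((f (w i) : ℝ) : ℂ))) * (star S * star U) := by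
        rw [hfcomm]
    _ = (U * S) * Matrix.diagonal (fun i => ((f (w i) : ℝ) : ℂ)) * star (U * S) := by
        have hst : star (U * S) = star S * star U := StarMul.star_mul _ _
        rw [hst]
        noncomm_ring
    _ = u * Matrix.diagonal (fun i => (f (w i) : ℂ)) * star u := by rw [← hV]

lemma matFun_isHermitian (f : ℝ → ℝ) {A : Mat} (hA : A.IsHermitian) :
    (matFun f A).IsHermitian := by
  rw [matFun, dif_pos hA]
  exact herm_of_unitary_conj _ (Unitary.coe_mul_star_self hA.eigenvectorUnitary)

lemma matFun_spectral (f : ℝ → ℝ) {A : Mat} (hA : A.IsHermitian) :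
    matFun f A = (hA.eigenvectorUnitary : Mat) *
      Matrix.diagonal (fun i => (f (hA.eigenvalues i) : ℂ)) *
      star (hA.eigenvectorUnitary : Mat) := by
  rw [matFun, dif_pos hA]

lemma matFun_comp (f g : ℝ → ℝ) {A : Mat} (hA : A.IsHermitian) :
    matFun f (matFun g A) = (hA.eigenvectorUnitary : Mat) *
      Matrix.diagonal (fun i => (f (g (hA.eigenvalues i)) : ℂ)) *
      star (hA.eigenvectorUnitary : Mat) :=
  matFun_decomp f _ _ (Unitary.coe_star_mul_self hA.eigenvectorUnitary)
    (Unitary.coe_mul_star_self hA.eigenvectorUnitary) (matFun_spectral g hA)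

lemma matExp_matLog {W : Mat} (hW : W.PosDef) : matExp (matLog W) = W := by
  have hA := hW.1
  rw [matExp, matLog, matFun_comp Real.exp Real.log hA]
  have : (fun i => ((Real.exp (Real.log (hA.eigenvalues i)) : ℝ) : ℂ))
      = fun i => ((hA.eigenvalues i : ℝ) : ℂ) := by
    funext i
    rw [Real.exp_log (hW.eigenvalues_pos i)]
  rw [this]
  have := hA.spectral_theorem.trans (Unitary.conjStarAlgAut_apply ..)
  exact this.symm


/-- Bridge: `matExp` of a Hermitian matrix equals the Banach-algebra exponential. -/
lemma matExp_eq_exp {A : Mat} (hA : A.IsHermitian) : matExp A = exp A := by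
  rw [matExp, matFun_spectral Real.exp hA]
  set U : Mat := (hA.eigenvectorUnitary : Mat) with hU
  have hU1 : star U * U = 1 := Unitary.coe_star_mul_self hA.eigenvectorUnitary
  have hU2 : U * star U = 1 := Unitary.coe_mul_star_self hA.eigenvectorUnitary
  have hinv : U⁻¹ = star U := Matrix.inv_eq_left_inv hU1
  have hunit : IsUnit U := ⟨⟨U, star U, hU2, hU1⟩, rfl⟩
  have hspec : A = U * Matrix.diagonal (fun i => ((hA.eigenvalues i : ℝ) : ℂ)) * star U := by
    exact hA.spectral_theorem.trans (Unitary.conjStarAlgAut_apply ..)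
  conv_rhs => rw [hspec, ← hinv]
  rw [Matrix.exp_conj U _ hunit, Matrix.exp_diagonal, hinv]
  have hfun : (fun i => ((Real.exp (hA.eigenvalues i) : ℝ) : ℂ))
      = exp (fun i => ((hA.eigenvalues i : ℝ) : ℂ)) := by
    rw [Pi.exp_def]
    funext i
    rw [← Complex.exp_eq_exp_ℂ, ← Complex.ofReal_exp]
  rw [hfun]

lemma posDef_real_smul {W : Mat} (hW : W.PosDef) {r : ℝ} (hr : 0 < r) :
    ((((r : ℝ)) : ℂ) • W).PosDef :=
  hW.smul (a := ((r : ℝ) : ℂ)) (by exact_mod_cast hr)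

lemma posSemidef_real_smul {A : Mat} (hA : A.PosSemidef) {r : ℝ} (hr : 0 ≤ r) :
    ((((r : ℝ)) : ℂ) • A).PosSemidef :=
  hA.smul (a := ((r : ℝ) : ℂ)) (by exact_mod_cast hr)

lemma posDef_diag_pos {W : Mat} (hW : W.PosDef) (i : Fin D) : 0 < (W i i).re := by
  have h := hW.diag_pos (i := i)
  simpa using (Complex.lt_def.mp h).1

lemma posDef_trace_re_pos [Nonempty (Fin D)] {W : Mat} (hW : W.PosDef) : 0 < (W.trace).re := by
  have : (W.trace).re = ∑ i, (W i i).re := by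
    rw [Matrix.trace, Complex.re_sum]
    rfl
  rw [this]
  exact Finset.sum_pos (fun i _ => posDef_diag_pos hW i) Finset.univ_nonempty

lemma re_ofReal_mul (r : ℝ) (z : ℂ) : (((r : ℝ) : ℂ) * z).re = r * z.re := by
  simp [Complex.mul_re]

theorem qsoftbayes_trace_nonincrease (D : ℕ) (η : ℝ) (hη0 : 0 < η) (hη1 : η < 1)
    (W A : Matrix (Fin D) (Fin D) ℂ) (hW : W.PosDef) (hWtr : (W.trace).re ≤ 1)
    (hA : A.PosSemidef)
    (ρ : Matrix (Fin D) (Fin D) ℂ) (hρ : ρ = (((W.trace).re)⁻¹ : ℂ) • W)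
    (hpos : 0 < ((A * ρ).trace).re)
    (W' : Matrix (Fin D) (Fin D) ℂ)
    (hW' : W' = matExp (matLog W +
      matLog ((((1 - η : ℝ)) : ℂ) • 1 + (((η / ((A * ρ).trace).re : ℝ)) : ℂ) • A))) :
    (W'.trace).re ≤ (W.trace).re := by
  rcases Nat.eq_zero_or_pos D with hD | hD
  · subst hD
    have h1 : W'.trace = 0 := by
      rw [Matrix.trace]
      exact Finset.sum_of_isEmpty _
    have h2 : W.trace = 0 := by
      rw [Matrix.trace]
      exact Finset.sum_of_isEmpty _
    rw [h1, h2]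
  haveI : Nonempty (Fin D) := Fin.pos_iff_nonempty.mp hD
  set t : ℝ := (W.trace).re with htdef
  have ht : 0 < t := posDef_trace_re_pos hW
  set c : ℝ := ((A * ρ).trace).re with hcdef
  set r : ℝ := ((A * W).trace).re with hrdef
  have hcr : c = t⁻¹ * r := by
    rw [hcdef, hρ, Matrix.mul_smul, Matrix.trace_smul, smul_eq_mul, ← Complex.ofReal_inv, re_ofReal_mul, hrdef]
  have hr : 0 < r := by
    have h1 : 0 < c := hpos
    rw [hcr] at h1
    nlinarith [inv_pos.mpr ht]
  set M : Matrix (Fin D) (Fin D) ℂ :=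
    (((1 - η : ℝ)) : ℂ) • 1 + (((η / c : ℝ)) : ℂ) • A with hMdef
  have hM : M.PosDef := by
    refine Matrix.PosDef.add_posSemidef ?_ ?_
    · exact posDef_real_smul Matrix.PosDef.one (by linarith)
    · exact posSemidef_real_smul hA (le_of_lt (div_pos hη0 hpos))
  have hLW : (matLog W).IsHermitian := matFun_isHermitian Real.log hW.1
  have hLM : (matLog M).IsHermitian := matFun_isHermitian Real.log hM.1
  have hWM : ((W * M).trace).re = t := by
    have he : W * M = (((1 - η : ℝ)) : ℂ) • W + (((η / c : ℝ)) : ℂ) • (W * A) := by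
      rw [hMdef, mul_add, Matrix.mul_smul, Matrix.mul_smul, mul_one]
    rw [he, Matrix.trace_add, Matrix.trace_smul, Matrix.trace_smul, Complex.add_re,
      smul_eq_mul, smul_eq_mul, re_ofReal_mul, re_ofReal_mul]
    have hWA : ((W * A).trace).re = r := by rw [hrdef, Matrix.trace_mul_comm]
    rw [hWA]
    have hc0 : c ≠ 0 := ne_of_gt hpos
    rw [hcr]
    field_simp
    ring
  calc (W'.trace).re
      = ((exp (matLog W + matLog M)).trace).re := by
        rw [hW', matExp_eq_exp (hLW.add hLM)]
    _ ≤ ((exp (matLog W) * exp (matLog M)).trace).re :=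
        golden_thompson _ _ hLW hLM
    _ = ((W * M).trace).re := by
        rw [← matExp_eq_exp hLW, ← matExp_eq_exp hLM, matExp_matLog hW, matExp_matLog hM]
    _ = t := hWM
    _ ≤ (W.trace).re := le_of_eq rfl
end
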